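/- Let C_2 act on the ring B = Z[t, t^{-1}, (t-1)^{-1}] by the ring automorphism sending t to 1/t. Then the invariant subring B^{C_2} is isomorphic to the Laurent polynomial ring Z[s, s^{-1}] via the map sending s to t/(t-1)^2. -/

import Mathlib

set_option maxHeartbeats 1000000
set_option synthInstance.maxHeartbeats 400000

/-- The field `ℚ(t)` of rational functions over `ℤ`. -/
abbrev RatFunF : Type := FractionRing (Polynomial ℤ)

/-- The element `t ∈ ℚ(t)`. -/
noncomputable def tF : RatFunF := algebraMap (Polynomial ℤ) RatFunF Polynomial.X

/-- The subring `B = ℤ[t, t⁻¹, (t-1)⁻¹]` of `ℚ(t)`. -/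
noncomputable def Bsub : Subring RatFunF :=
  (Algebra.adjoin ℤ ({tF, tF⁻¹, (tF - 1)⁻¹} : Set RatFunF)).toSubring

/-! ### Auxiliary definitions -/

noncomputable def sF : RatFunF := tF / (tF - 1) ^ 2
noncomputable def uF : RatFunF := tF + tF⁻¹
noncomputable def Usub : Subring RatFunF := Subring.closure {uF}
noncomputable def Asub : Subring RatFunF := Subring.closure {tF, tF⁻¹}
noncomputable def Ssub : Subring RatFunF := Subring.closure {sF, sF⁻¹}

/-! ### Basic facts about `t` -/

lemma injF : Function.Injective (algebraMap (Polynomial ℤ) RatFunF) :=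
  IsFractionRing.injective _ _

lemma ht0 : tF ≠ 0 := by
  intro h
  exact Polynomial.X_ne_zero (injF (by simpa [tF] using h))

lemma ht1 : tF - 1 ≠ 0 := by
  intro h
  have h2 : algebraMap (Polynomial ℤ) RatFunF (Polynomial.X - 1) =
      algebraMap (Polynomial ℤ) RatFunF 0 := by
    rw [map_sub, map_zero, ← h]; simp [tF]
  simpa [Polynomial.coeff_one] using congrArg (Polynomial.coeff · 1) (injF h2)

lemma htm1 : tF + 1 ≠ 0 := by
  intro h
  have h2 : algebraMap (Polynomial ℤ) RatFunF (Polynomial.X + 1) =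
      algebraMap (Polynomial ℤ) RatFunF 0 := by
    rw [map_add, map_zero, ← h]; simp [tF]
  simpa [Polynomial.coeff_one] using congrArg (Polynomial.coeff · 1) (injF h2)

lemma hti1 : tF⁻¹ - 1 ≠ 0 := by
  intro h
  apply ht1
  have : tF * (tF⁻¹ - 1) = -(tF - 1) := by field_simp [ht0]; ring
  rw [h, mul_zero] at this
  rw [show tF - 1 = -(-(tF - 1)) by ring, ← this, neg_zero]

lemma hs0 : sF ≠ 0 := by
  simp only [sF, div_ne_zero_iff]
  exact ⟨ht0, pow_ne_zero _ ht1⟩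

lemma t_trans : Transcendental ℤ tF := by
  intro ⟨P, hP, h0⟩
  rw [tF, Polynomial.aeval_algebraMap_apply] at h0
  simp only [Polynomial.aeval_X_left_apply] at h0
  exact hP (injF (by simpa using h0))

instance : @IsScalarTower ℤ ℚ RatFunF Algebra.toSMul Algebra.toSMul Algebra.toSMul :=
  IsScalarTower.of_algebraMap_eq' (Subsingleton.elim _ _)

lemma tq_trans : Transcendental ℚ tF := by
  rw [Transcendental, ← IsFractionRing.isAlgebraic_iff ℤ ℚ RatFunF]
  exact t_trans

/-! ### `s` is transcendental over `ℤ` -/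

lemma s_trans : Transcendental ℤ sF := by
  intro halg
  have hq : IsAlgebraic ℚ sF := (IsFractionRing.isAlgebraic_iff ℤ ℚ RatFunF).1 halg
  set K := IntermediateField.adjoin ℚ ({sF} : Set RatFunF) with hK
  haveI : Algebra.IsAlgebraic ℚ K := IntermediateField.isAlgebraic_adjoin (by
    rintro x hx
    rw [Set.mem_singleton_iff] at hx
    exact hx ▸ hq.isIntegral)
  haveI : Algebra.IsIntegral ℚ K := Algebra.IsAlgebraic.isIntegral
  have hmem : sF ∈ K := IntermediateField.mem_adjoin_simple_self ℚ sF
  set c : K := ⟨sF⁻¹ + 2, add_mem (inv_mem hmem) (by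
    exact_mod_cast IntermediateField.intCast_mem K 2)⟩ with hc
  have hint : IsIntegral K tF := by
    refine ⟨Polynomial.X ^ 2 - Polynomial.C c * Polynomial.X + 1, ?_, ?_⟩
    · monicity!
    · have hcF : (algebraMap K RatFunF) c = sF⁻¹ + 2 := rfl
      simp only [Polynomial.eval₂_add, Polynomial.eval₂_sub, Polynomial.eval₂_mul,
        Polynomial.eval₂_pow, Polynomial.eval₂_one, Polynomial.eval₂_X, Polynomial.eval₂_C]
      rw [hcF, sF]
      field_simp [ht0, ht1]
      ring
  have : IsIntegral ℚ tF := isIntegral_trans tF hint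
  exact tq_trans this.isAlgebraic

/-! ### The evaluation map `ℤ[T, T⁻¹] → ℚ(t)`, `T ↦ s` -/

noncomputable def sU : RatFunFˣ := Units.mk0 sF hs0

noncomputable def φ : LaurentPolynomial ℤ →ₐ[ℤ] RatFunF :=
  AddMonoidAlgebra.lift ℤ RatFunF ℤ ((Units.coeHom RatFunF).comp (zpowersHom RatFunFˣ sU))

lemma φ_T (n : ℤ) : φ (LaurentPolynomial.T n) = sF ^ n := by
  rw [LaurentPolynomial.T, φ]
  rw [AddMonoidAlgebra.lift_single]
  simp [sU]

lemma φ_toLaurent (P : Polynomial ℤ) : φ (Polynomial.toLaurent P) = Polynomial.aeval sF P := by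
  have h : φ.comp Polynomial.toLaurentAlg = Polynomial.aeval sF := by
    apply Polynomial.algHom_ext
    simp only [AlgHom.comp_apply, Polynomial.toLaurentAlg_apply, Polynomial.toLaurent_X,
      Polynomial.aeval_X, φ_T, zpow_one]
  have := DFunLike.congr_fun h P
  simpa [Polynomial.toLaurentAlg_apply] using this

lemma φ_inj : Function.Injective φ := by
  rw [injective_iff_map_eq_zero]
  intro p hp
  obtain ⟨n, P, hP⟩ := p.exists_T_pow
  have h1 : Polynomial.aeval sF P = 0 := by
    rw [← φ_toLaurent, hP, map_mul, hp, zero_mul]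
  have hP0 : P = 0 := by
    by_contra h
    exact s_trans ⟨P, h, h1⟩
  have h2 : p * LaurentPolynomial.T (n : ℤ) = 0 := by
    rw [← hP, hP0, map_zero]
  calc p = p * LaurentPolynomial.T n * LaurentPolynomial.T (-n) := by
        rw [mul_assoc, ← LaurentPolynomial.T_add, add_neg_cancel, LaurentPolynomial.T_zero,
          mul_one]
    _ = 0 := by rw [h2, zero_mul]

lemma aeval_mem_S (P : Polynomial ℤ) : Polynomial.aeval sF P ∈ Ssub := by
  induction P using Polynomial.induction_on with
  | C a => simpa using intCast_mem Ssub a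
  | add p q hp hq => rw [map_add]; exact add_mem hp hq
  | monomial n a _ =>
      rw [map_mul, map_pow, Polynomial.aeval_X, Polynomial.aeval_C]
      refine mul_mem (by simpa using intCast_mem Ssub a)
        (pow_mem (Subring.subset_closure (by simp)) _)

lemma φ_mem_S (p : LaurentPolynomial ℤ) : φ p ∈ Ssub := by
  obtain ⟨n, P, hP⟩ := p.exists_T_pow
  have hp : p = Polynomial.toLaurent P * LaurentPolynomial.T (-n : ℤ) := by
    rw [hP, mul_assoc, ← LaurentPolynomial.T_add, add_neg_cancel, LaurentPolynomial.T_zero,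
      mul_one]
  rw [hp, map_mul, φ_toLaurent, φ_T]
  refine mul_mem (aeval_mem_S P) ?_
  rw [zpow_neg, zpow_natCast, ← inv_pow]
  exact pow_mem (Subring.subset_closure (by simp)) n

lemma φ_surj_S {x : RatFunF} (hx : x ∈ Ssub) : ∃ p, φ p = x := by
  induction hx using Subring.closure_induction with
  | mem y hy =>
      rcases hy with rfl | rfl
      · exact ⟨LaurentPolynomial.T 1, by rw [φ_T, zpow_one]⟩
      · exact ⟨LaurentPolynomial.T (-1), by rw [φ_T, zpow_neg_one]⟩
  | zero => exact ⟨0, map_zero _⟩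
  | one => exact ⟨1, map_one _⟩
  | add x y _ _ ihx ihy =>
      obtain ⟨p, rfl⟩ := ihx; obtain ⟨q, rfl⟩ := ihy
      exact ⟨p + q, map_add _ _ _⟩
  | neg x _ ihx =>
      obtain ⟨p, rfl⟩ := ihx
      exact ⟨-p, map_neg _ _⟩
  | mul x y _ _ ihx ihy =>
      obtain ⟨p, rfl⟩ := ihx; obtain ⟨q, rfl⟩ := ihy
      exact ⟨p * q, map_mul _ _ _⟩

/-! ### Decompositions of `A = ℤ[t,t⁻¹]` and `B` -/

lemma A_decomp {x : RatFunF} (hx : x ∈ Asub) :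
    ∃ a ∈ Usub, ∃ b ∈ Usub, x = a + b * tF := by
  induction hx using Subring.closure_induction with
  | mem y hy =>
      rcases hy with rfl | rfl
      · exact ⟨0, zero_mem _, 1, one_mem _, by ring⟩
      · refine ⟨uF, Subring.subset_closure rfl, -1, neg_mem (one_mem _), ?_⟩
        rw [uF]; field_simp [ht0]; ring
  | zero => exact ⟨0, zero_mem _, 0, zero_mem _, by ring⟩
  | one => exact ⟨1, one_mem _, 0, zero_mem _, by ring⟩
  | add x y hx hy ihx ihy =>
      obtain ⟨a, ha, b, hb, rfl⟩ := ihx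
      obtain ⟨c, hc, d, hd, rfl⟩ := ihy
      exact ⟨a + c, add_mem ha hc, b + d, add_mem hb hd, by ring⟩
  | neg x hx ihx =>
      obtain ⟨a, ha, b, hb, rfl⟩ := ihx
      exact ⟨-a, neg_mem ha, -b, neg_mem hb, by ring⟩
  | mul x y hx hy ihx ihy =>
      obtain ⟨a, ha, b, hb, rfl⟩ := ihx
      obtain ⟨c, hc, d, hd, rfl⟩ := ihy
      have hu : uF ∈ Usub := Subring.subset_closure rfl
      refine ⟨a * c - b * d, sub_mem (mul_mem ha hc) (mul_mem hb hd),
        a * d + b * c + b * d * uF, add_mem (add_mem (mul_mem ha hd) (mul_mem hb hc))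
          (mul_mem (mul_mem hb hd) hu), ?_⟩
      have ht2 : tF * tF = uF * tF - 1 := by rw [uF]; field_simp [ht0]; ring
      ring_nf
      rw [show tF ^ 2 = tF * tF by ring, ht2]
      ring

lemma B_decomp {x : RatFunF} (hx : x ∈ Subring.closure {tF, tF⁻¹, (tF - 1)⁻¹}) :
    ∃ n : ℕ, x * (tF - 1) ^ (2 * n) ∈ Asub := by
  have htA : tF ∈ Asub := Subring.subset_closure (by simp)
  have htiA : tF⁻¹ ∈ Asub := Subring.subset_closure (by simp)
  have ht1A : tF - 1 ∈ Asub := sub_mem htA (one_mem _)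
  have hpow : ∀ k : ℕ, (tF - 1) ^ (2 * k) ∈ Asub := fun k => pow_mem ht1A _
  induction hx using Subring.closure_induction with
  | mem y hy =>
      rcases hy with rfl | rfl | rfl
      · exact ⟨0, by simpa using htA⟩
      · exact ⟨0, by simpa using htiA⟩
      · refine ⟨1, ?_⟩
        have : (tF - 1)⁻¹ * (tF - 1) ^ (2 * 1) = tF - 1 := by
          rw [pow_mul, pow_one, pow_two, ← mul_assoc, inv_mul_cancel₀ ht1, one_mul]
        rw [this]; exact ht1A
  | zero => exact ⟨0, by simpa using zero_mem Asub⟩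
  | one => exact ⟨0, by simpa using one_mem Asub⟩
  | add x y hx hy ihx ihy =>
      obtain ⟨m, hm⟩ := ihx
      obtain ⟨k, hk⟩ := ihy
      refine ⟨m + k, ?_⟩
      have : (x + y) * (tF - 1) ^ (2 * (m + k)) =
          x * (tF - 1) ^ (2 * m) * (tF - 1) ^ (2 * k)
          + y * (tF - 1) ^ (2 * k) * (tF - 1) ^ (2 * m) := by ring
      rw [this]
      exact add_mem (mul_mem hm (hpow k)) (mul_mem hk (hpow m))
  | neg x hx ihx =>
      obtain ⟨m, hm⟩ := ihx
      refine ⟨m, ?_⟩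
      rw [neg_mul]
      exact neg_mem hm
  | mul x y hx hy ihx ihy =>
      obtain ⟨m, hm⟩ := ihx
      obtain ⟨k, hk⟩ := ihy
      refine ⟨m + k, ?_⟩
      have : x * y * (tF - 1) ^ (2 * (m + k)) =
          (x * (tF - 1) ^ (2 * m)) * (y * (tF - 1) ^ (2 * k)) := by ring
      rw [this]
      exact mul_mem hm hk

lemma Bsub_eq : Bsub = Subring.closure {tF, tF⁻¹, (tF - 1)⁻¹} := by
  apply le_antisymm
  · intro x hx
    have hx' : x ∈ Algebra.adjoin ℤ ({tF, tF⁻¹, (tF - 1)⁻¹} : Set RatFunF) := hx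
    clear hx
    induction hx' using Algebra.adjoin_induction with
    | mem y hy => exact Subring.subset_closure hy
    | algebraMap r => simpa using intCast_mem (Subring.closure {tF, tF⁻¹, (tF - 1)⁻¹}) r
    | add x y hx hy ihx ihy => exact add_mem ihx ihy
    | mul x y hx hy ihx ihy => exact mul_mem ihx ihy
  · rw [Subring.closure_le]
    intro y hy
    exact Algebra.subset_adjoin hy

/-! ### Membership facts for `Ssub` -/

lemma sF_inv_eq : sF⁻¹ = (tF - 1) * ((tF - 1) * tF⁻¹) := by
  rw [sF]
  field_simp

lemma uF_eq : uF = sF⁻¹ + 2 := by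
  rw [uF, sF]
  field_simp [ht0, ht1]
  ring

lemma U_le_S : Usub ≤ Ssub := by
  rw [Usub, Subring.closure_le]
  rintro x rfl
  rw [uF_eq]
  refine add_mem (Subring.subset_closure (by simp)) ?_
  exact_mod_cast intCast_mem Ssub 2

lemma S_le_B : Ssub ≤ Bsub := by
  rw [Bsub_eq, Ssub, Subring.closure_le]
  have htB : tF ∈ Subring.closure {tF, tF⁻¹, (tF - 1)⁻¹} := Subring.subset_closure (by simp)
  have htiB : tF⁻¹ ∈ Subring.closure {tF, tF⁻¹, (tF - 1)⁻¹} := Subring.subset_closure (by simp)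
  have ht1iB : (tF - 1)⁻¹ ∈ Subring.closure {tF, tF⁻¹, (tF - 1)⁻¹} :=
    Subring.subset_closure (by simp)
  rintro x (rfl | rfl)
  · have : sF = tF * ((tF - 1)⁻¹ * (tF - 1)⁻¹) := by
      rw [sF, pow_two, div_eq_mul_inv, mul_inv]
    rw [this]
    exact mul_mem htB (mul_mem ht1iB ht1iB)
  · rw [sF_inv_eq]
    exact mul_mem (sub_mem htB (one_mem _)) (mul_mem (sub_mem htB (one_mem _)) htiB)

/-! ### Invariance arguments -/

lemma hσti (σ : RatFunF ≃+* RatFunF) (hσ : σ tF = tF⁻¹) : σ tF⁻¹ = tF := by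
  rw [map_inv₀, hσ, inv_inv]

lemma hσu (σ : RatFunF ≃+* RatFunF) (hσ : σ tF = tF⁻¹) : σ uF = uF := by
  rw [uF, map_add, hσ, hσti σ hσ, add_comm]

lemma hσs (σ : RatFunF ≃+* RatFunF) (hσ : σ tF = tF⁻¹) : σ sF = sF := by
  rw [sF, map_div₀, map_pow, map_sub, map_one, hσ]
  rw [div_eq_div_iff (pow_ne_zero _ hti1) (pow_ne_zero _ ht1)]
  field_simp [ht0]
  ring

lemma U_fix {x : RatFunF} (hx : x ∈ Usub) (σ : RatFunF ≃+* RatFunF)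
    (hσ : σ tF = tF⁻¹) : σ x = x := by
  have : Usub ≤ RingHom.eqLocus (σ : RatFunF →+* RatFunF) (RingHom.id RatFunF) := by
    rw [Usub, Subring.closure_le]
    rintro y rfl
    exact hσu σ hσ
  exact this hx

lemma A_inv {x : RatFunF} (hx : x ∈ Asub) (σ : RatFunF ≃+* RatFunF)
    (hσ : σ tF = tF⁻¹) (hfix : σ x = x) : x ∈ Usub := by
  obtain ⟨a, ha, b, hb, rfl⟩ := A_decomp hx
  have hfa : σ a = a := U_fix ha σ hσ
  have hfb : σ b = b := U_fix hb σ hσ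
  have hσx : σ (a + b * tF) = a + b * tF⁻¹ := by
    rw [map_add, map_mul, hfa, hfb, hσ]
  have hb0 : b * (tF - tF⁻¹) = 0 := by
    have := hσx.symm.trans hfix
    linear_combination -this
  have htti : tF - tF⁻¹ ≠ 0 := by
    intro h
    apply mul_ne_zero ht1 htm1
    have : (tF - 1) * (tF + 1) = tF * (tF - tF⁻¹) := by field_simp [ht0]; ring
    rw [this, h, mul_zero]
  have : b = 0 := by
    rcases mul_eq_zero.1 hb0 with h | h
    · exact h
    · exact absurd h htti
  rw [this, zero_mul, add_zero]
  exact ha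

lemma key_incl (σ : RatFunF ≃+* RatFunF) (hσ : σ tF = tF⁻¹) {x : RatFunF}
    (hx : x ∈ Bsub ⊓ RingHom.eqLocus (σ : RatFunF →+* RatFunF) (RingHom.id RatFunF)) :
    x ∈ Ssub := by
  obtain ⟨hxB, hxE⟩ := hx
  rw [Bsub_eq] at hxB
  obtain ⟨n, hA⟩ := B_decomp hxB
  set h := x * (tF - 1) ^ (2 * n) * (tF⁻¹) ^ n with hh
  have hmA : h ∈ Asub :=
    mul_mem hA (pow_mem (Subring.subset_closure (by simp)) n)
  have hfixx : σ x = x := hxE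
  have base : (tF⁻¹ - 1) ^ 2 * tF = (tF - 1) ^ 2 * tF⁻¹ := by
    field_simp [ht0]
    ring
  have hfix : σ h = h := by
    rw [hh, map_mul, map_mul, map_pow, map_pow, map_sub, map_one, hσ, hσti σ hσ, hfixx]
    have heq : (tF⁻¹ - 1) ^ (2 * n) * tF ^ n = (tF - 1) ^ (2 * n) * tF⁻¹ ^ n := by
      rw [pow_mul, pow_mul, ← mul_pow, ← mul_pow, base]
    rw [mul_assoc, mul_assoc, heq]
  have hU : h ∈ Usub := A_inv hmA σ hσ hfix
  have hs1 : (tF - 1) ^ (2 * n) * (tF⁻¹) ^ n * sF ^ n = 1 := by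
    rw [pow_mul, ← mul_pow, ← mul_pow]
    rw [show (tF - 1) ^ 2 * tF⁻¹ * sF = 1 by rw [sF]; field_simp [ht0, ht1]]
    exact one_pow n
  have hxh : x = h * sF ^ n := by
    rw [hh, mul_assoc, mul_assoc, ← mul_assoc ((tF - 1) ^ (2 * n)), hs1, mul_one]
  rw [hxh]
  exact mul_mem (U_le_S hU) (pow_mem (Subring.subset_closure (by simp)) n)

lemma S_eq_inv (σ : RatFunF ≃+* RatFunF) (hσ : σ tF = tF⁻¹) :
    Ssub = Bsub ⊓ RingHom.eqLocus (σ : RatFunF →+* RatFunF) (RingHom.id RatFunF) := by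
  refine le_antisymm ?_ (fun x hx => key_incl σ hσ hx)
  refine le_inf S_le_B ?_
  rw [Ssub, Subring.closure_le]
  rintro x (rfl | rfl)
  · exact hσs σ hσ
  · show σ sF⁻¹ = sF⁻¹
    rw [map_inv₀, hσs σ hσ]

/-- let `C₂` act on `B = ℤ[t, t⁻¹, (t-1)⁻¹]` by `t ↦ 1/t` (i.e. via any
ring automorphism `σ` of `ℚ(t)` with `σ(t) = t⁻¹`).  Then the invariant subring
`B^{C₂}` is isomorphic to the Laurent polynomial ring `ℤ[s, s⁻¹]` via the map sending
`s` to `t/(t-1)²`. -/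
theorem stmt0 (σ : RatFunF ≃+* RatFunF) (hσ : σ tF = tF⁻¹) :
    ∃ e : LaurentPolynomial ℤ ≃+*
        ↥(Bsub ⊓ RingHom.eqLocus (σ : RatFunF →+* RatFunF) (RingHom.id RatFunF)),
      ((e (LaurentPolynomial.T 1) : ↥(Bsub ⊓ RingHom.eqLocus (σ : RatFunF →+* RatFunF)
          (RingHom.id RatFunF))) : RatFunF) = tF / (tF - 1) ^ 2 := by
  have hS := S_eq_inv σ hσ
  have hSD : ∀ y, φ y ∈ Bsub ⊓ RingHom.eqLocus (σ : RatFunF →+* RatFunF) (RingHom.id RatFunF) :=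
    fun y => hS ▸ φ_mem_S y
  let ψ : LaurentPolynomial ℤ →+*
      ↥(Bsub ⊓ RingHom.eqLocus (σ : RatFunF →+* RatFunF) (RingHom.id RatFunF)) :=
    (φ : LaurentPolynomial ℤ →+* RatFunF).codRestrict _ hSD
  have hbij : Function.Bijective ψ := by
    constructor
    · intro a b hab
      apply φ_inj
      exact congrArg Subtype.val hab
    · rintro ⟨y, hy⟩
      have hy' : y ∈ Ssub := by rw [hS]; exact hy
      obtain ⟨p, hp⟩ := φ_surj_S hy'
      exact ⟨p, Subtype.ext hp⟩
  refine ⟨RingEquiv.ofBijective ψ hbij, ?_⟩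
  show (ψ (LaurentPolynomial.T 1) : RatFunF) = tF / (tF - 1) ^ 2
  have : (ψ (LaurentPolynomial.T 1) : RatFunF) = φ (LaurentPolynomial.T 1) := rfl
  rw [this, φ_T, zpow_one, sF]
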